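/- arXiv:2110.08119 — 4 statements merged into one kernel-verified Lean document; each statement's English description precedes it below -/
import Mathlib

section
/- In a quaternion algebra B over ℝ, for p, q ∈ B and unit-norm invertible directions α, β with αβ̄ − βᾱ ≠ 0, the intersection point of the lines p + ℝα and q + ℝβ, when r and s from p + rα = q + sβ are real, is given by ⟦p,q⟧_{α,β} = p + [β(p̄ − q̄) − (p − q)β̄](αβ̄ − βᾱ)^{−1}α. -/
noncomputable section

open scoped Quaternion

/-- The intersection point of the line through `p` with direction `α` and the line
through `q` with direction `β`: `z` lies on both lines and is the unique such point. -/
def OrigamiInter {V : Type*} [AddCommGroup V] [Module ℝ V]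
    (p q α β z : V) : Prop :=
  (∃ r s : ℝ, z = p + r • α ∧ z = q + s • β) ∧
  ∀ z', (∃ r s : ℝ, z' = p + r • α ∧ z' = q + s • β) → z' = z

/-- Iterated origami construction with seed points `{0, e}` and direction set `U`. -/
def Mseq {V : Type*} [AddCommGroup V] [Module ℝ V] (U : Set V) (e : V) : ℕ → Set V
  | 0 => {0, e}
  | k + 1 => {z | ∃ p ∈ Mseq U e k, ∃ q ∈ Mseq U e k, ∃ α ∈ U, ∃ β ∈ U,
      OrigamiInter p q α β z}

/-- The origami set `M(U)` with seed points `{0, e}`. -/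
def MU {V : Type*} [AddCommGroup V] [Module ℝ V] (U : Set V) (e : V) : Set V :=
  ⋃ k, Mseq U e k

/-- The first standard basis vector of `ℝⁿ`, playing the role of `1`. -/
def uno (n : ℕ) : EuclideanSpace ℝ (Fin (n + 1)) := EuclideanSpace.single 0 1

theorem stmt10 (p q α β : ℍ[ℝ]) (hα : ‖α‖ = 1) (hβ : ‖β‖ = 1)
    (hne : α * star β - β * star α ≠ 0)
    (r s : ℝ) (h : p + r • α = q + s • β) :
    p + r • α =
      p + (β * (star p - star q) - (p - q) * star β) *
        (α * star β - β * star α)⁻¹ * α := by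
  have hβ1 : β * star β = 1 := by
    rw [Quaternion.self_mul_star]
    have : Quaternion.normSq β = 1 := by
      rw [Quaternion.normSq_eq_norm_mul_self, hβ]; ring
    rw [this]; norm_num
  have hpq : p - q = s • β - r • α := by
    have := h; linear_combination (norm := module) h
  have key : β * (star p - star q) - (p - q) * star β
      = r • (α * star β - β * star α) := by
    have hstar : star p - star q = s • star β - r • star α := by
      calc star p - star q = star (p - q) := by rw [star_sub]
        _ = _ := by rw [hpq]; simp [star_sub, star_smul]
    rw [hstar, hpq]
    simp only [mul_sub, sub_mul, smul_mul_assoc, mul_smul_comm, smul_sub]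
    rw [hβ1]
    module
  rw [key, smul_mul_assoc, mul_inv_cancel₀ hne, smul_mul_assoc, one_mul]
end
end

section
/- In ℝ⁴ identified with the Hamilton quaternions, the origami set M(U) with seed points {0,1} and direction set U = {1, i, (i−1)/√2, j, (j−1)/√2, k, (k−1)/√2} equals the Lipschitz order ℤ + ℤi + ℤj + ℤk. -/
noncomputable section

open scoped Quaternion

def qi : ℍ[ℝ] := ⟨0, 1, 0, 0⟩
def qj : ℍ[ℝ] := ⟨0, 0, 1, 0⟩
def qk : ℍ[ℝ] := ⟨0, 0, 0, 1⟩

namespace Origami13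

def Uset : Set ℍ[ℝ] :=
  {1, qi, (Real.sqrt 2)⁻¹ • (qi - 1), qj, (Real.sqrt 2)⁻¹ • (qj - 1),
    qk, (Real.sqrt 2)⁻¹ • (qk - 1)}

def MM : Set ℍ[ℝ] := MU Uset 1

def Zc (x : ℝ) : Prop := ∃ n : ℤ, x = n

def Zq (z : ℍ[ℝ]) : Prop := Zc z.re ∧ Zc z.imI ∧ Zc z.imJ ∧ Zc z.imK

@[simp] lemma qi_re : qi.re = 0 := rfl
@[simp] lemma qi_imI : qi.imI = 1 := rfl
@[simp] lemma qi_imJ : qi.imJ = 0 := rfl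
@[simp] lemma qi_imK : qi.imK = 0 := rfl
@[simp] lemma qj_re : qj.re = 0 := rfl
@[simp] lemma qj_imI : qj.imI = 0 := rfl
@[simp] lemma qj_imJ : qj.imJ = 1 := rfl
@[simp] lemma qj_imK : qj.imK = 0 := rfl
@[simp] lemma qk_re : qk.re = 0 := rfl
@[simp] lemma qk_imI : qk.imI = 0 := rfl
@[simp] lemma qk_imJ : qk.imJ = 0 := rfl
@[simp] lemma qk_imK : qk.imK = 1 := rfl

lemma sqrt2_ne : (Real.sqrt 2) ≠ 0 := ne_of_gt (Real.sqrt_pos.2 two_pos)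

lemma Zq_zero : Zq 0 := ⟨⟨0, by simp⟩, ⟨0, by simp⟩, ⟨0, by simp⟩, ⟨0, by simp⟩⟩
lemma Zq_one : Zq 1 := ⟨⟨1, by simp⟩, ⟨0, by simp⟩, ⟨0, by simp⟩, ⟨0, by simp⟩⟩
lemma Zq_qi : Zq qi := ⟨⟨0, by simp [qi]⟩, ⟨1, by simp [qi]⟩, ⟨0, by simp [qi]⟩, ⟨0, by simp [qi]⟩⟩
lemma Zq_qj : Zq qj := ⟨⟨0, by simp [qj]⟩, ⟨0, by simp [qj]⟩, ⟨1, by simp [qj]⟩, ⟨0, by simp [qj]⟩⟩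
lemma Zq_qk : Zq qk := ⟨⟨0, by simp [qk]⟩, ⟨0, by simp [qk]⟩, ⟨0, by simp [qk]⟩, ⟨1, by simp [qk]⟩⟩
lemma Zq_A : Zq (qi - 1) :=
  ⟨⟨-1, by simp⟩, ⟨1, by simp⟩, ⟨0, by simp⟩, ⟨0, by simp⟩⟩
lemma Zq_B : Zq (qj - 1) :=
  ⟨⟨-1, by simp⟩, ⟨0, by simp⟩, ⟨1, by simp⟩, ⟨0, by simp⟩⟩
lemma Zq_C : Zq (qk - 1) :=
  ⟨⟨-1, by simp⟩, ⟨0, by simp⟩, ⟨0, by simp⟩, ⟨1, by simp⟩⟩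

lemma comps1 {z p : ℍ[ℝ]} {t : ℝ} (h : z = p + t • (1 : ℍ[ℝ])) :
    z.re = p.re + t ∧ z.imI = p.imI ∧ z.imJ = p.imJ ∧ z.imK = p.imK := by
  subst h; refine ⟨?_, ?_, ?_, ?_⟩ <;> simp

lemma compsI {z p : ℍ[ℝ]} {t : ℝ} (h : z = p + t • qi) :
    z.re = p.re ∧ z.imI = p.imI + t ∧ z.imJ = p.imJ ∧ z.imK = p.imK := by
  subst h; refine ⟨?_, ?_, ?_, ?_⟩ <;> simp

lemma compsJ {z p : ℍ[ℝ]} {t : ℝ} (h : z = p + t • qj) :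
    z.re = p.re ∧ z.imI = p.imI ∧ z.imJ = p.imJ + t ∧ z.imK = p.imK := by
  subst h; refine ⟨?_, ?_, ?_, ?_⟩ <;> simp

lemma compsK {z p : ℍ[ℝ]} {t : ℝ} (h : z = p + t • qk) :
    z.re = p.re ∧ z.imI = p.imI ∧ z.imJ = p.imJ ∧ z.imK = p.imK + t := by
  subst h; refine ⟨?_, ?_, ?_, ?_⟩ <;> simp

lemma compsA {z p : ℍ[ℝ]} {t : ℝ} (h : z = p + t • (qi - 1)) :
    z.re = p.re - t ∧ z.imI = p.imI + t ∧ z.imJ = p.imJ ∧ z.imK = p.imK := by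
  subst h; refine ⟨?_, ?_, ?_, ?_⟩ <;> simp <;> ring

lemma compsB {z p : ℍ[ℝ]} {t : ℝ} (h : z = p + t • (qj - 1)) :
    z.re = p.re - t ∧ z.imI = p.imI ∧ z.imJ = p.imJ + t ∧ z.imK = p.imK := by
  subst h; refine ⟨?_, ?_, ?_, ?_⟩ <;> simp <;> ring

lemma compsC {z p : ℍ[ℝ]} {t : ℝ} (h : z = p + t • (qk - 1)) :
    z.re = p.re - t ∧ z.imI = p.imI ∧ z.imJ = p.imJ ∧ z.imK = p.imK + t := by
  subst h; refine ⟨?_, ?_, ?_, ?_⟩ <;> simp <;> ring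

lemma Zq_step {p z v : ℍ[ℝ]} {t : ℝ} (hp : Zq p) (hv : Zq v) (hm : ∃ m : ℤ, t = m)
    (h : z = p + t • v) : Zq z := by
  obtain ⟨m, rfl⟩ := hm
  obtain ⟨⟨a, ha⟩, ⟨b, hb⟩, ⟨c, hc⟩, ⟨d, hd⟩⟩ := hp
  obtain ⟨⟨a', ha'⟩, ⟨b', hb'⟩, ⟨c', hc'⟩, ⟨d', hd'⟩⟩ := hv
  have e0 : z.re = p.re + (m : ℝ) * v.re := by rw [h]; simp [mul_comm]
  have e1 : z.imI = p.imI + (m : ℝ) * v.imI := by rw [h]; simp [mul_comm]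
  have e2 : z.imJ = p.imJ + (m : ℝ) * v.imJ := by rw [h]; simp [mul_comm]
  have e3 : z.imK = p.imK + (m : ℝ) * v.imK := by rw [h]; simp [mul_comm]
  exact ⟨⟨a + m * a', by rw [e0, ha, ha']; push_cast; ring⟩,
    ⟨b + m * b', by rw [e1, hb, hb']; push_cast; ring⟩,
    ⟨c + m * c', by rw [e2, hc, hc']; push_cast; ring⟩,
    ⟨d + m * d', by rw [e3, hd, hd']; push_cast; ring⟩⟩

lemma diag_false {p q α z : ℍ[ℝ]} {r s : ℝ} (h1 : z = p + r • α) (h2 : z = q + s • α)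
    (hun : ∀ z', (∃ r s : ℝ, z' = p + r • α ∧ z' = q + s • α) → z' = z) (h0 : α ≠ 0) :
    False := by
  refine h0 ?_
  have hz := hun (z + α) ⟨r + 1, s + 1, by rw [h1]; module, by rw [h2]; module⟩
  linear_combination (norm := module) hz

lemma ne_qi : qi ≠ 0 := by
  intro h
  have h' := congrArg QuaternionAlgebra.imI h
  simp [qi] at h'

lemma ne_qj : qj ≠ 0 := by
  intro h
  have h' := congrArg QuaternionAlgebra.imJ h
  simp [qj] at h'

lemma ne_qk : qk ≠ 0 := by
  intro h
  have h' := congrArg QuaternionAlgebra.imK h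
  simp [qk] at h'

lemma ne_A : (Real.sqrt 2)⁻¹ • (qi - 1) ≠ 0 := by
  intro h
  have h' := congrArg QuaternionAlgebra.imI h
  apply inv_ne_zero sqrt2_ne
  simpa using h'

lemma ne_B : (Real.sqrt 2)⁻¹ • (qj - 1) ≠ 0 := by
  intro h
  have h' := congrArg QuaternionAlgebra.imJ h
  apply inv_ne_zero sqrt2_ne
  simpa using h'

lemma ne_C : (Real.sqrt 2)⁻¹ • (qk - 1) ≠ 0 := by
  intro h
  have h' := congrArg QuaternionAlgebra.imK h
  apply inv_ne_zero sqrt2_ne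
  simpa using h'

set_option maxHeartbeats 3200000 in
lemma inter_step {p q α β z : ℍ[ℝ]} (hp : Zq p) (hq : Zq q) (hα : α ∈ Uset) (hβ : β ∈ Uset)
    (h : OrigamiInter p q α β z) : Zq z := by
  obtain ⟨⟨r, s, h1, h2⟩, hun⟩ := h
  have hp2 := hp
  have hq2 := hq
  obtain ⟨⟨pa, hpa⟩, ⟨pb, hpb⟩, ⟨pc, hpc⟩, ⟨pd, hpd⟩⟩ := hp2
  obtain ⟨⟨qa, hqa⟩, ⟨qb, hqb⟩, ⟨qc, hqc⟩, ⟨qd, hqd⟩⟩ := hq2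
  simp only [Uset, Set.mem_insert_iff, Set.mem_singleton_iff] at hα hβ
  rcases hα with rfl | rfl | rfl | rfl | rfl | rfl | rfl <;>
    rcases hβ with rfl | rfl | rfl | rfl | rfl | rfl | rfl
  · exact (diag_false h1 h2 hun one_ne_zero).elim
  · skip
    refine Zq_step hp Zq_one ?_ h1
    obtain ⟨e0, e1, e2, e3⟩ := comps1 h1
    obtain ⟨f0, f1, f2, f3⟩ := compsI h2
    refine ⟨qa - pa, ?_⟩
    push_cast
    linarith [e0, e1, e2, e3, f0, f1, f2, f3, hpa, hpb, hpc, hpd, hqa, hqb, hqc, hqd]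
  · skip
    simp only [smul_smul] at h2
    refine Zq_step hp Zq_one ?_ h1
    obtain ⟨e0, e1, e2, e3⟩ := comps1 h1
    obtain ⟨f0, f1, f2, f3⟩ := compsA h2
    refine ⟨qa - pa + (qb - pb), ?_⟩
    push_cast
    linarith [e0, e1, e2, e3, f0, f1, f2, f3, hpa, hpb, hpc, hpd, hqa, hqb, hqc, hqd]
  · skip
    refine Zq_step hp Zq_one ?_ h1
    obtain ⟨e0, e1, e2, e3⟩ := comps1 h1
    obtain ⟨f0, f1, f2, f3⟩ := compsJ h2
    refine ⟨qa - pa, ?_⟩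
    push_cast
    linarith [e0, e1, e2, e3, f0, f1, f2, f3, hpa, hpb, hpc, hpd, hqa, hqb, hqc, hqd]
  · skip
    simp only [smul_smul] at h2
    refine Zq_step hp Zq_one ?_ h1
    obtain ⟨e0, e1, e2, e3⟩ := comps1 h1
    obtain ⟨f0, f1, f2, f3⟩ := compsB h2
    refine ⟨qa - pa + (qc - pc), ?_⟩
    push_cast
    linarith [e0, e1, e2, e3, f0, f1, f2, f3, hpa, hpb, hpc, hpd, hqa, hqb, hqc, hqd]
  · skip
    refine Zq_step hp Zq_one ?_ h1
    obtain ⟨e0, e1, e2, e3⟩ := comps1 h1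
    obtain ⟨f0, f1, f2, f3⟩ := compsK h2
    refine ⟨qa - pa, ?_⟩
    push_cast
    linarith [e0, e1, e2, e3, f0, f1, f2, f3, hpa, hpb, hpc, hpd, hqa, hqb, hqc, hqd]
  · skip
    simp only [smul_smul] at h2
    refine Zq_step hp Zq_one ?_ h1
    obtain ⟨e0, e1, e2, e3⟩ := comps1 h1
    obtain ⟨f0, f1, f2, f3⟩ := compsC h2
    refine ⟨qa - pa + (qd - pd), ?_⟩
    push_cast
    linarith [e0, e1, e2, e3, f0, f1, f2, f3, hpa, hpb, hpc, hpd, hqa, hqb, hqc, hqd]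
  · skip
    refine Zq_step hp Zq_qi ?_ h1
    obtain ⟨e0, e1, e2, e3⟩ := compsI h1
    obtain ⟨f0, f1, f2, f3⟩ := comps1 h2
    refine ⟨qb - pb, ?_⟩
    push_cast
    linarith [e0, e1, e2, e3, f0, f1, f2, f3, hpa, hpb, hpc, hpd, hqa, hqb, hqc, hqd]
  · exact (diag_false h1 h2 hun ne_qi).elim
  · skip
    simp only [smul_smul] at h2
    refine Zq_step hp Zq_qi ?_ h1
    obtain ⟨e0, e1, e2, e3⟩ := compsI h1
    obtain ⟨f0, f1, f2, f3⟩ := compsA h2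
    refine ⟨qa - pa + (qb - pb), ?_⟩
    push_cast
    linarith [e0, e1, e2, e3, f0, f1, f2, f3, hpa, hpb, hpc, hpd, hqa, hqb, hqc, hqd]
  · skip
    refine Zq_step hp Zq_qi ?_ h1
    obtain ⟨e0, e1, e2, e3⟩ := compsI h1
    obtain ⟨f0, f1, f2, f3⟩ := compsJ h2
    refine ⟨qb - pb, ?_⟩
    push_cast
    linarith [e0, e1, e2, e3, f0, f1, f2, f3, hpa, hpb, hpc, hpd, hqa, hqb, hqc, hqd]
  · skip
    simp only [smul_smul] at h2
    refine Zq_step hp Zq_qi ?_ h1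
    obtain ⟨e0, e1, e2, e3⟩ := compsI h1
    obtain ⟨f0, f1, f2, f3⟩ := compsB h2
    refine ⟨qb - pb, ?_⟩
    push_cast
    linarith [e0, e1, e2, e3, f0, f1, f2, f3, hpa, hpb, hpc, hpd, hqa, hqb, hqc, hqd]
  · skip
    refine Zq_step hp Zq_qi ?_ h1
    obtain ⟨e0, e1, e2, e3⟩ := compsI h1
    obtain ⟨f0, f1, f2, f3⟩ := compsK h2
    refine ⟨qb - pb, ?_⟩
    push_cast
    linarith [e0, e1, e2, e3, f0, f1, f2, f3, hpa, hpb, hpc, hpd, hqa, hqb, hqc, hqd]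
  · skip
    simp only [smul_smul] at h2
    refine Zq_step hp Zq_qi ?_ h1
    obtain ⟨e0, e1, e2, e3⟩ := compsI h1
    obtain ⟨f0, f1, f2, f3⟩ := compsC h2
    refine ⟨qb - pb, ?_⟩
    push_cast
    linarith [e0, e1, e2, e3, f0, f1, f2, f3, hpa, hpb, hpc, hpd, hqa, hqb, hqc, hqd]
  · simp only [smul_smul] at h1
    refine Zq_step hp Zq_A ?_ h1
    obtain ⟨e0, e1, e2, e3⟩ := compsA h1
    obtain ⟨f0, f1, f2, f3⟩ := comps1 h2
    refine ⟨qb - pb, ?_⟩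
    push_cast
    linarith [e0, e1, e2, e3, f0, f1, f2, f3, hpa, hpb, hpc, hpd, hqa, hqb, hqc, hqd]
  · simp only [smul_smul] at h1
    refine Zq_step hp Zq_A ?_ h1
    obtain ⟨e0, e1, e2, e3⟩ := compsA h1
    obtain ⟨f0, f1, f2, f3⟩ := compsI h2
    refine ⟨pa - qa, ?_⟩
    push_cast
    linarith [e0, e1, e2, e3, f0, f1, f2, f3, hpa, hpb, hpc, hpd, hqa, hqb, hqc, hqd]
  · exact (diag_false h1 h2 hun ne_A).elim
  · simp only [smul_smul] at h1
    refine Zq_step hp Zq_A ?_ h1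
    obtain ⟨e0, e1, e2, e3⟩ := compsA h1
    obtain ⟨f0, f1, f2, f3⟩ := compsJ h2
    refine ⟨pa - qa, ?_⟩
    push_cast
    linarith [e0, e1, e2, e3, f0, f1, f2, f3, hpa, hpb, hpc, hpd, hqa, hqb, hqc, hqd]
  · simp only [smul_smul] at h1
    simp only [smul_smul] at h2
    refine Zq_step hp Zq_A ?_ h1
    obtain ⟨e0, e1, e2, e3⟩ := compsA h1
    obtain ⟨f0, f1, f2, f3⟩ := compsB h2
    refine ⟨qb - pb, ?_⟩
    push_cast
    linarith [e0, e1, e2, e3, f0, f1, f2, f3, hpa, hpb, hpc, hpd, hqa, hqb, hqc, hqd]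
  · simp only [smul_smul] at h1
    refine Zq_step hp Zq_A ?_ h1
    obtain ⟨e0, e1, e2, e3⟩ := compsA h1
    obtain ⟨f0, f1, f2, f3⟩ := compsK h2
    refine ⟨pa - qa, ?_⟩
    push_cast
    linarith [e0, e1, e2, e3, f0, f1, f2, f3, hpa, hpb, hpc, hpd, hqa, hqb, hqc, hqd]
  · simp only [smul_smul] at h1
    simp only [smul_smul] at h2
    refine Zq_step hp Zq_A ?_ h1
    obtain ⟨e0, e1, e2, e3⟩ := compsA h1
    obtain ⟨f0, f1, f2, f3⟩ := compsC h2
    refine ⟨qb - pb, ?_⟩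
    push_cast
    linarith [e0, e1, e2, e3, f0, f1, f2, f3, hpa, hpb, hpc, hpd, hqa, hqb, hqc, hqd]
  · skip
    refine Zq_step hp Zq_qj ?_ h1
    obtain ⟨e0, e1, e2, e3⟩ := compsJ h1
    obtain ⟨f0, f1, f2, f3⟩ := comps1 h2
    refine ⟨qc - pc, ?_⟩
    push_cast
    linarith [e0, e1, e2, e3, f0, f1, f2, f3, hpa, hpb, hpc, hpd, hqa, hqb, hqc, hqd]
  · skip
    refine Zq_step hp Zq_qj ?_ h1
    obtain ⟨e0, e1, e2, e3⟩ := compsJ h1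
    obtain ⟨f0, f1, f2, f3⟩ := compsI h2
    refine ⟨qc - pc, ?_⟩
    push_cast
    linarith [e0, e1, e2, e3, f0, f1, f2, f3, hpa, hpb, hpc, hpd, hqa, hqb, hqc, hqd]
  · skip
    simp only [smul_smul] at h2
    refine Zq_step hp Zq_qj ?_ h1
    obtain ⟨e0, e1, e2, e3⟩ := compsJ h1
    obtain ⟨f0, f1, f2, f3⟩ := compsA h2
    refine ⟨qc - pc, ?_⟩
    push_cast
    linarith [e0, e1, e2, e3, f0, f1, f2, f3, hpa, hpb, hpc, hpd, hqa, hqb, hqc, hqd]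
  · exact (diag_false h1 h2 hun ne_qj).elim
  · skip
    simp only [smul_smul] at h2
    refine Zq_step hp Zq_qj ?_ h1
    obtain ⟨e0, e1, e2, e3⟩ := compsJ h1
    obtain ⟨f0, f1, f2, f3⟩ := compsB h2
    refine ⟨qa - pa + (qc - pc), ?_⟩
    push_cast
    linarith [e0, e1, e2, e3, f0, f1, f2, f3, hpa, hpb, hpc, hpd, hqa, hqb, hqc, hqd]
  · skip
    refine Zq_step hp Zq_qj ?_ h1
    obtain ⟨e0, e1, e2, e3⟩ := compsJ h1
    obtain ⟨f0, f1, f2, f3⟩ := compsK h2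
    refine ⟨qc - pc, ?_⟩
    push_cast
    linarith [e0, e1, e2, e3, f0, f1, f2, f3, hpa, hpb, hpc, hpd, hqa, hqb, hqc, hqd]
  · skip
    simp only [smul_smul] at h2
    refine Zq_step hp Zq_qj ?_ h1
    obtain ⟨e0, e1, e2, e3⟩ := compsJ h1
    obtain ⟨f0, f1, f2, f3⟩ := compsC h2
    refine ⟨qc - pc, ?_⟩
    push_cast
    linarith [e0, e1, e2, e3, f0, f1, f2, f3, hpa, hpb, hpc, hpd, hqa, hqb, hqc, hqd]
  · simp only [smul_smul] at h1
    refine Zq_step hp Zq_B ?_ h1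
    obtain ⟨e0, e1, e2, e3⟩ := compsB h1
    obtain ⟨f0, f1, f2, f3⟩ := comps1 h2
    refine ⟨qc - pc, ?_⟩
    push_cast
    linarith [e0, e1, e2, e3, f0, f1, f2, f3, hpa, hpb, hpc, hpd, hqa, hqb, hqc, hqd]
  · simp only [smul_smul] at h1
    refine Zq_step hp Zq_B ?_ h1
    obtain ⟨e0, e1, e2, e3⟩ := compsB h1
    obtain ⟨f0, f1, f2, f3⟩ := compsI h2
    refine ⟨pa - qa, ?_⟩
    push_cast
    linarith [e0, e1, e2, e3, f0, f1, f2, f3, hpa, hpb, hpc, hpd, hqa, hqb, hqc, hqd]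
  · simp only [smul_smul] at h1
    simp only [smul_smul] at h2
    refine Zq_step hp Zq_B ?_ h1
    obtain ⟨e0, e1, e2, e3⟩ := compsB h1
    obtain ⟨f0, f1, f2, f3⟩ := compsA h2
    refine ⟨qc - pc, ?_⟩
    push_cast
    linarith [e0, e1, e2, e3, f0, f1, f2, f3, hpa, hpb, hpc, hpd, hqa, hqb, hqc, hqd]
  · simp only [smul_smul] at h1
    refine Zq_step hp Zq_B ?_ h1
    obtain ⟨e0, e1, e2, e3⟩ := compsB h1
    obtain ⟨f0, f1, f2, f3⟩ := compsJ h2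
    refine ⟨pa - qa, ?_⟩
    push_cast
    linarith [e0, e1, e2, e3, f0, f1, f2, f3, hpa, hpb, hpc, hpd, hqa, hqb, hqc, hqd]
  · exact (diag_false h1 h2 hun ne_B).elim
  · simp only [smul_smul] at h1
    refine Zq_step hp Zq_B ?_ h1
    obtain ⟨e0, e1, e2, e3⟩ := compsB h1
    obtain ⟨f0, f1, f2, f3⟩ := compsK h2
    refine ⟨pa - qa, ?_⟩
    push_cast
    linarith [e0, e1, e2, e3, f0, f1, f2, f3, hpa, hpb, hpc, hpd, hqa, hqb, hqc, hqd]
  · simp only [smul_smul] at h1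
    simp only [smul_smul] at h2
    refine Zq_step hp Zq_B ?_ h1
    obtain ⟨e0, e1, e2, e3⟩ := compsB h1
    obtain ⟨f0, f1, f2, f3⟩ := compsC h2
    refine ⟨qc - pc, ?_⟩
    push_cast
    linarith [e0, e1, e2, e3, f0, f1, f2, f3, hpa, hpb, hpc, hpd, hqa, hqb, hqc, hqd]
  · skip
    refine Zq_step hp Zq_qk ?_ h1
    obtain ⟨e0, e1, e2, e3⟩ := compsK h1
    obtain ⟨f0, f1, f2, f3⟩ := comps1 h2
    refine ⟨qd - pd, ?_⟩
    push_cast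
    linarith [e0, e1, e2, e3, f0, f1, f2, f3, hpa, hpb, hpc, hpd, hqa, hqb, hqc, hqd]
  · skip
    refine Zq_step hp Zq_qk ?_ h1
    obtain ⟨e0, e1, e2, e3⟩ := compsK h1
    obtain ⟨f0, f1, f2, f3⟩ := compsI h2
    refine ⟨qd - pd, ?_⟩
    push_cast
    linarith [e0, e1, e2, e3, f0, f1, f2, f3, hpa, hpb, hpc, hpd, hqa, hqb, hqc, hqd]
  · skip
    simp only [smul_smul] at h2
    refine Zq_step hp Zq_qk ?_ h1
    obtain ⟨e0, e1, e2, e3⟩ := compsK h1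
    obtain ⟨f0, f1, f2, f3⟩ := compsA h2
    refine ⟨qd - pd, ?_⟩
    push_cast
    linarith [e0, e1, e2, e3, f0, f1, f2, f3, hpa, hpb, hpc, hpd, hqa, hqb, hqc, hqd]
  · skip
    refine Zq_step hp Zq_qk ?_ h1
    obtain ⟨e0, e1, e2, e3⟩ := compsK h1
    obtain ⟨f0, f1, f2, f3⟩ := compsJ h2
    refine ⟨qd - pd, ?_⟩
    push_cast
    linarith [e0, e1, e2, e3, f0, f1, f2, f3, hpa, hpb, hpc, hpd, hqa, hqb, hqc, hqd]
  · skip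
    simp only [smul_smul] at h2
    refine Zq_step hp Zq_qk ?_ h1
    obtain ⟨e0, e1, e2, e3⟩ := compsK h1
    obtain ⟨f0, f1, f2, f3⟩ := compsB h2
    refine ⟨qd - pd, ?_⟩
    push_cast
    linarith [e0, e1, e2, e3, f0, f1, f2, f3, hpa, hpb, hpc, hpd, hqa, hqb, hqc, hqd]
  · exact (diag_false h1 h2 hun ne_qk).elim
  · skip
    simp only [smul_smul] at h2
    refine Zq_step hp Zq_qk ?_ h1
    obtain ⟨e0, e1, e2, e3⟩ := compsK h1
    obtain ⟨f0, f1, f2, f3⟩ := compsC h2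
    refine ⟨qa - pa + (qd - pd), ?_⟩
    push_cast
    linarith [e0, e1, e2, e3, f0, f1, f2, f3, hpa, hpb, hpc, hpd, hqa, hqb, hqc, hqd]
  · simp only [smul_smul] at h1
    refine Zq_step hp Zq_C ?_ h1
    obtain ⟨e0, e1, e2, e3⟩ := compsC h1
    obtain ⟨f0, f1, f2, f3⟩ := comps1 h2
    refine ⟨qd - pd, ?_⟩
    push_cast
    linarith [e0, e1, e2, e3, f0, f1, f2, f3, hpa, hpb, hpc, hpd, hqa, hqb, hqc, hqd]
  · simp only [smul_smul] at h1
    refine Zq_step hp Zq_C ?_ h1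
    obtain ⟨e0, e1, e2, e3⟩ := compsC h1
    obtain ⟨f0, f1, f2, f3⟩ := compsI h2
    refine ⟨pa - qa, ?_⟩
    push_cast
    linarith [e0, e1, e2, e3, f0, f1, f2, f3, hpa, hpb, hpc, hpd, hqa, hqb, hqc, hqd]
  · simp only [smul_smul] at h1
    simp only [smul_smul] at h2
    refine Zq_step hp Zq_C ?_ h1
    obtain ⟨e0, e1, e2, e3⟩ := compsC h1
    obtain ⟨f0, f1, f2, f3⟩ := compsA h2
    refine ⟨qd - pd, ?_⟩
    push_cast
    linarith [e0, e1, e2, e3, f0, f1, f2, f3, hpa, hpb, hpc, hpd, hqa, hqb, hqc, hqd]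
  · simp only [smul_smul] at h1
    refine Zq_step hp Zq_C ?_ h1
    obtain ⟨e0, e1, e2, e3⟩ := compsC h1
    obtain ⟨f0, f1, f2, f3⟩ := compsJ h2
    refine ⟨pa - qa, ?_⟩
    push_cast
    linarith [e0, e1, e2, e3, f0, f1, f2, f3, hpa, hpb, hpc, hpd, hqa, hqb, hqc, hqd]
  · simp only [smul_smul] at h1
    simp only [smul_smul] at h2
    refine Zq_step hp Zq_C ?_ h1
    obtain ⟨e0, e1, e2, e3⟩ := compsC h1
    obtain ⟨f0, f1, f2, f3⟩ := compsB h2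
    refine ⟨qd - pd, ?_⟩
    push_cast
    linarith [e0, e1, e2, e3, f0, f1, f2, f3, hpa, hpb, hpc, hpd, hqa, hqb, hqc, hqd]
  · simp only [smul_smul] at h1
    refine Zq_step hp Zq_C ?_ h1
    obtain ⟨e0, e1, e2, e3⟩ := compsC h1
    obtain ⟨f0, f1, f2, f3⟩ := compsK h2
    refine ⟨pa - qa, ?_⟩
    push_cast
    linarith [e0, e1, e2, e3, f0, f1, f2, f3, hpa, hpb, hpc, hpd, hqa, hqb, hqc, hqd]
  · exact (diag_false h1 h2 hun ne_C).elim

lemma one_memU : (1 : ℍ[ℝ]) ∈ Uset := by simp [Uset]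
lemma qi_memU : qi ∈ Uset := by simp [Uset]
lemma qj_memU : qj ∈ Uset := by simp [Uset]
lemma qk_memU : qk ∈ Uset := by simp [Uset]
lemma A_memU : (Real.sqrt 2)⁻¹ • (qi - 1) ∈ Uset := by simp [Uset]
lemma B_memU : (Real.sqrt 2)⁻¹ • (qj - 1) ∈ Uset := by simp [Uset]
lemma C_memU : (Real.sqrt 2)⁻¹ • (qk - 1) ∈ Uset := by simp [Uset]

lemma indep_qi : ∀ a b : ℝ, a • qi + b • (1 : ℍ[ℝ]) = 0 → a = 0 ∧ b = 0 := by
  intro a b h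
  rw [Quaternion.ext_iff] at h
  simp at h
  exact ⟨h.2, h.1⟩

lemma indep_qj : ∀ a b : ℝ, a • qj + b • (1 : ℍ[ℝ]) = 0 → a = 0 ∧ b = 0 := by
  intro a b h
  rw [Quaternion.ext_iff] at h
  simp at h
  exact ⟨h.2, h.1⟩

lemma indep_qk : ∀ a b : ℝ, a • qk + b • (1 : ℍ[ℝ]) = 0 → a = 0 ∧ b = 0 := by
  intro a b h
  rw [Quaternion.ext_iff] at h
  simp at h
  exact ⟨h.2, h.1⟩

lemma mseq_succ (k : ℕ) : Mseq Uset (1 : ℍ[ℝ]) k ⊆ Mseq Uset 1 (k + 1) := by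
  intro x hx
  refine ⟨x, hx, x, hx, 1, one_memU, qi, qi_memU, ⟨⟨0, 0, by simp, by simp⟩, ?_⟩⟩
  rintro z' ⟨r, s, hr, hs⟩
  have key : (-s) • qi + r • (1 : ℍ[ℝ]) = 0 := by
    linear_combination (norm := module) hs - hr
  obtain ⟨k1, k2⟩ := indep_qi _ _ key
  rw [hr, k2]
  simp

lemma mseq_mono {m n : ℕ} (h : m ≤ n) : Mseq Uset (1 : ℍ[ℝ]) m ⊆ Mseq Uset 1 n := by
  induction n, h using Nat.le_induction with
  | base => exact subset_rfl
  | succ n hmn ih => exact ih.trans (mseq_succ n)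

lemma mclosure {p q α β z : ℍ[ℝ]} (hp : p ∈ MM) (hq : q ∈ MM) (hα : α ∈ Uset)
    (hβ : β ∈ Uset) (h : OrigamiInter p q α β z) : z ∈ MM := by
  obtain ⟨m, hm⟩ := Set.mem_iUnion.1 hp
  obtain ⟨n, hn⟩ := Set.mem_iUnion.1 hq
  refine Set.mem_iUnion.2 ⟨max m n + 1, ?_⟩
  exact ⟨p, mseq_mono (le_max_left m n) hm, q, mseq_mono (le_max_right m n) hn,
    α, hα, β, hβ, h⟩

lemma zero_mem : (0 : ℍ[ℝ]) ∈ MM := Set.mem_iUnion.2 ⟨0, by simp [Mseq]⟩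

lemma one_mem : (1 : ℍ[ℝ]) ∈ MM := Set.mem_iUnion.2 ⟨0, by simp [Mseq]⟩

section Moves

variable {p q z : ℍ[ℝ]} {t u : ℝ} (m : ℍ[ℝ]) (hmU : m ∈ Uset)
  (hm'U : (Real.sqrt 2)⁻¹ • (m - 1) ∈ Uset)
  (hind : ∀ a b : ℝ, a • m + b • (1 : ℍ[ℝ]) = 0 → a = 0 ∧ b = 0)

include hmU hm'U hind

lemma move1 (hp : p ∈ MM) (hq : q ∈ MM) (hq' : q = p + t • (1 : ℍ[ℝ]))
    (hz : z = p + t • m) : z ∈ MM := by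
  refine mclosure hp hq hmU hm'U ⟨⟨t, t * Real.sqrt 2, hz, ?_⟩, ?_⟩
  · rw [hz, hq', smul_smul,
      show t * Real.sqrt 2 * (Real.sqrt 2)⁻¹ = t by field_simp]
    module
  · rintro z' ⟨r, s, u1, u2⟩
    rw [hq', smul_smul] at u2
    have key : (r - s * (Real.sqrt 2)⁻¹) • m + (s * (Real.sqrt 2)⁻¹ - t) • (1 : ℍ[ℝ]) = 0 := by
      linear_combination (norm := module) u2 - u1
    obtain ⟨k1, k2⟩ := hind _ _ key
    have hr : r = t := by linarith
    rw [u1, hz, hr]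

lemma move2 (hp : p ∈ MM) (hq : q ∈ MM) (hq' : q = p + t • m)
    (hz : z = p + t • (1 : ℍ[ℝ])) : z ∈ MM := by
  refine mclosure hp hq one_memU hm'U ⟨⟨t, -(t * Real.sqrt 2), hz, ?_⟩, ?_⟩
  · rw [hz, hq', smul_smul,
      show -(t * Real.sqrt 2) * (Real.sqrt 2)⁻¹ = -t by field_simp]
    module
  · rintro z' ⟨r, s, u1, u2⟩
    rw [hq', smul_smul] at u2
    have key : (-t - s * (Real.sqrt 2)⁻¹) • m + (r + s * (Real.sqrt 2)⁻¹) • (1 : ℍ[ℝ]) = 0 := by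
      linear_combination (norm := module) u2 - u1
    obtain ⟨k1, k2⟩ := hind _ _ key
    have hr : r = t := by linarith
    rw [u1, hz, hr]

lemma move3 (hp : p ∈ MM) (hq : q ∈ MM) (hq' : q = p + t • m)
    (hz : z = p + t • m - t • (1 : ℍ[ℝ])) : z ∈ MM := by
  refine mclosure hq hp one_memU hm'U ⟨⟨-t, t * Real.sqrt 2, ?_, ?_⟩, ?_⟩
  · rw [hz, hq']; module
  · rw [hz, smul_smul, show t * Real.sqrt 2 * (Real.sqrt 2)⁻¹ = t by field_simp]
    module
  · rintro z' ⟨r, s, u1, u2⟩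
    rw [hq'] at u1
    rw [smul_smul] at u2
    have key : (t - s * (Real.sqrt 2)⁻¹) • m + (r + s * (Real.sqrt 2)⁻¹) • (1 : ℍ[ℝ]) = 0 := by
      linear_combination (norm := module) u2 - u1
    obtain ⟨k1, k2⟩ := hind _ _ key
    have hr : r = -t := by linarith
    rw [u1, hz, hr]
    module

lemma move4 (hp : p ∈ MM) (hq : q ∈ MM) (hq' : q = p + t • (1 : ℍ[ℝ]))
    (hz : z = p + t • (1 : ℍ[ℝ]) - t • m) : z ∈ MM := by
  refine mclosure hq hp hmU hm'U ⟨⟨-t, -(t * Real.sqrt 2), ?_, ?_⟩, ?_⟩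
  · rw [hz, hq']; module
  · rw [hz, smul_smul, show -(t * Real.sqrt 2) * (Real.sqrt 2)⁻¹ = -t by field_simp]
    module
  · rintro z' ⟨r, s, u1, u2⟩
    rw [hq'] at u1
    rw [smul_smul] at u2
    have key : (r - s * (Real.sqrt 2)⁻¹) • m + (t + s * (Real.sqrt 2)⁻¹) • (1 : ℍ[ℝ]) = 0 := by
      linear_combination (norm := module) u2 - u1
    obtain ⟨k1, k2⟩ := hind _ _ key
    have hr : r = -t := by linarith
    rw [u1, hz, hr]
    module

lemma move5 (hp : p ∈ MM) (hq : q ∈ MM) (hq' : q = p + t • (1 : ℍ[ℝ]) + u • m)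
    (hz : z = p + t • (1 : ℍ[ℝ])) : z ∈ MM := by
  refine mclosure hp hq one_memU hmU ⟨⟨t, -u, hz, ?_⟩, ?_⟩
  · rw [hz, hq']; module
  · rintro z' ⟨r, s, u1, u2⟩
    rw [hq'] at u2
    have key : (-u - s) • m + (r - t) • (1 : ℍ[ℝ]) = 0 := by
      linear_combination (norm := module) u2 - u1
    obtain ⟨k1, k2⟩ := hind _ _ key
    have hr : r = t := by linarith
    rw [u1, hz, hr]

end Moves

lemma nat_up : ∀ n : ℕ, ((n : ℝ)) • (1 : ℍ[ℝ]) ∈ MM ∧ ((n : ℝ) + 1) • (1 : ℍ[ℝ]) ∈ MM := by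
  intro n
  induction n with
  | zero =>
    constructor
    · simpa using zero_mem
    · simpa using one_mem
  | succ n ih =>
    obtain ⟨h0, h1⟩ := ih
    constructor
    · rw [Nat.cast_succ]; exact h1
    · rw [Nat.cast_succ]
      have s1 : ((n : ℝ)) • (1 : ℍ[ℝ]) + (1 : ℝ) • (1 : ℍ[ℝ]) - (1 : ℝ) • qi ∈ MM :=
        move4 qi qi_memU A_memU indep_qi h0 h1 (by module) rfl
      have s2 : ((n : ℝ)) • (1 : ℍ[ℝ]) + (1 : ℝ) • (1 : ℍ[ℝ]) - (1 : ℝ) • qi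
          + (1 : ℝ) • (1 : ℍ[ℝ]) ∈ MM :=
        move2 qi qi_memU A_memU indep_qi s1 h1 (by module) rfl
      exact move5 qi qi_memU A_memU indep_qi zero_mem s2
        (show ((n : ℝ)) • (1 : ℍ[ℝ]) + (1 : ℝ) • (1 : ℍ[ℝ]) - (1 : ℝ) • qi
            + (1 : ℝ) • (1 : ℍ[ℝ]) = 0 + ((n : ℝ) + 2) • (1 : ℍ[ℝ]) + (-1 : ℝ) • qi
          by module)
        (by module : ((n : ℝ) + 1 + 1) • (1 : ℍ[ℝ]) = 0 + ((n : ℝ) + 2) • (1 : ℍ[ℝ]))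

lemma nat_down : ∀ n : ℕ, (-(n : ℝ)) • (1 : ℍ[ℝ]) ∈ MM ∧ (-(n : ℝ) + 1) • (1 : ℍ[ℝ]) ∈ MM := by
  intro n
  induction n with
  | zero =>
    constructor
    · simpa using zero_mem
    · simpa using one_mem
  | succ n ih =>
    obtain ⟨h0, h1⟩ := ih
    constructor
    · rw [Nat.cast_succ]
      have t1 : (-(n : ℝ)) • (1 : ℍ[ℝ]) + (1 : ℝ) • qi ∈ MM :=
        move1 qi qi_memU A_memU indep_qi h0 h1 (by module) rfl
      have t2 : (-(n : ℝ)) • (1 : ℍ[ℝ]) + (1 : ℝ) • qi - (1 : ℝ) • (1 : ℍ[ℝ]) ∈ MM :=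
        move3 qi qi_memU A_memU indep_qi h0 t1 rfl rfl
      exact move5 qi qi_memU A_memU indep_qi zero_mem t2
        (show (-(n : ℝ)) • (1 : ℍ[ℝ]) + (1 : ℝ) • qi - (1 : ℝ) • (1 : ℍ[ℝ])
            = 0 + (-(n : ℝ) - 1) • (1 : ℍ[ℝ]) + (1 : ℝ) • qi
          by module)
        (by module : (-((n : ℝ) + 1)) • (1 : ℍ[ℝ]) = 0 + (-(n : ℝ) - 1) • (1 : ℍ[ℝ]))
    · rw [Nat.cast_succ, show -((n : ℝ) + 1) + 1 = -(n : ℝ) by ring]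
      exact h0

lemma int_mem (n : ℤ) : ((n : ℝ)) • (1 : ℍ[ℝ]) ∈ MM := by
  obtain ⟨m, rfl | rfl⟩ := n.eq_nat_or_neg
  · rw [Int.cast_natCast]; exact (nat_up m).1
  · rw [Int.cast_neg, Int.cast_natCast]; exact (nat_down m).1

lemma lattice_mem (a b c d : ℤ) :
    ((a : ℝ)) • (1 : ℍ[ℝ]) + ((b : ℝ)) • qi + ((c : ℝ)) • qj + ((d : ℝ)) • qk ∈ MM := by
  have hab : ∀ a b : ℤ, ((a : ℝ)) • (1 : ℍ[ℝ]) + ((b : ℝ)) • qi ∈ MM := by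
    intro a b
    exact move1 qi qi_memU A_memU indep_qi (int_mem a) (int_mem (a + b))
      (by push_cast; module) rfl
  have habc : ∀ a b c : ℤ, ((a : ℝ)) • (1 : ℍ[ℝ]) + ((b : ℝ)) • qi + ((c : ℝ)) • qj ∈ MM := by
    intro a b c
    exact move1 qj qj_memU B_memU indep_qj (hab a b) (hab (a + c) b)
      (by push_cast; module) rfl
  exact move1 qk qk_memU C_memU indep_qk (habc a b c) (habc (a + d) b c)
    (by push_cast; module) rfl

lemma mseq_zq : ∀ k : ℕ, ∀ z ∈ Mseq Uset (1 : ℍ[ℝ]) k, Zq z := by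
  intro k
  induction k with
  | zero =>
    intro z hz
    simp only [Mseq, Set.mem_insert_iff, Set.mem_singleton_iff] at hz
    rcases hz with rfl | rfl
    · exact Zq_zero
    · exact Zq_one
  | succ k ih =>
    intro z hz
    simp only [Mseq] at hz
    obtain ⟨p, hp, q, hq, α, hα, β, hβ, h⟩ := hz
    exact inter_step (ih p hp) (ih q hq) hα hβ h

lemma Zq_to_rep {z : ℍ[ℝ]} (h : Zq z) :
    ∃ a b c d : ℤ, z = ((a : ℝ)) • (1 : ℍ[ℝ]) + ((b : ℝ)) • qi + ((c : ℝ)) • qj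
      + ((d : ℝ)) • qk := by
  obtain ⟨⟨a, ha⟩, ⟨b, hb⟩, ⟨c, hc⟩, ⟨d, hd⟩⟩ := h
  refine ⟨a, b, c, d, ?_⟩
  ext <;> simp [ha, hb, hc, hd]

end Origami13

theorem stmt13 :
    MU ({1, qi, (Real.sqrt 2)⁻¹ • (qi - 1), qj, (Real.sqrt 2)⁻¹ • (qj - 1),
        qk, (Real.sqrt 2)⁻¹ • (qk - 1)} : Set ℍ[ℝ]) 1 =
      {z : ℍ[ℝ] | ∃ a b c d : ℤ,
        z = (a : ℝ) • 1 + (b : ℝ) • qi + (c : ℝ) • qj + (d : ℝ) • qk} := by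
  show Origami13.MM = _
  ext z
  simp only [Set.mem_setOf_eq]
  constructor
  · intro hz
    obtain ⟨k, hk⟩ := Set.mem_iUnion.1 hz
    exact Origami13.Zq_to_rep (Origami13.mseq_zq k z hk)
  · rintro ⟨a, b, c, d, rfl⟩
    exact Origami13.lattice_mem a b c d
end
end

section
/- Let U be a set of directions in ℝⁿ containing 1 such that M(U) is a full lattice in ℝⁿ. Then U contains at least 2n − 1 directions; moreover, U contains a subset {1, α₁, α₁′, ..., α_{n−1}, α_{n−1}′} such that for each i there exist r, s ∈ ℝ with rαᵢ − sαᵢ′ ∈ ℝ + ℝα₁ + ⋯ + ℝα_{i−1}, and {1, α₁, ..., α_{n−1}} is linearly independent. -/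
noncomputable section

open scoped Quaternion

section Aux

variable {V : Type*} [AddCommGroup V] [Module ℝ V]

/-- Key extraction lemma: a minimal-stage origami point outside `W` produces two distinct
directions outside `W` whose suitable combination lies in `W`. -/
lemma origami_key (U : Set V) (e : V) (W : Submodule ℝ V) (he : e ∈ W)
    (hz : ∃ z ∈ MU U e, z ∉ W) :
    ∃ α ∈ U, ∃ β ∈ U, α ≠ β ∧ α ∉ W ∧ β ∉ W ∧
      ∃ r s : ℝ, r ≠ 0 ∧ s ≠ 0 ∧ r • α - s • β ∈ W := by
  classical
  have hex : ∃ k, ∃ z ∈ Mseq U e k, z ∉ W := by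
    obtain ⟨z, hzMU, hzW⟩ := hz
    obtain ⟨k, hk⟩ := Set.mem_iUnion.1 hzMU
    exact ⟨k, z, hk, hzW⟩
  have hk0 : Nat.find hex ≠ 0 := by
    intro h0
    obtain ⟨z, hzk, hzW⟩ := Nat.find_spec hex
    rw [h0] at hzk
    rcases hzk with h | h
    · exact hzW (h ▸ W.zero_mem)
    · exact hzW (h ▸ he)
  obtain ⟨m, hm⟩ : ∃ m, Nat.find hex = m + 1 := ⟨Nat.find hex - 1, by omega⟩
  have hprev : ∀ z ∈ Mseq U e m, z ∈ W := by
    intro z hzm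
    by_contra hzW
    exact Nat.find_min hex (by omega) ⟨z, hzm, hzW⟩
  obtain ⟨z, hzk, hzW⟩ := Nat.find_spec hex
  rw [hm] at hzk
  obtain ⟨p, hp, q, hq, α, hα, β, hβ, ⟨⟨r, s, hz1, hz2⟩, huniq⟩⟩ := hzk
  have hpW : p ∈ W := hprev p hp
  have hqW : q ∈ W := hprev q hq
  have hαW : α ∉ W := fun h => hzW (hz1 ▸ W.add_mem hpW (W.smul_mem r h))
  have hβW : β ∉ W := fun h => hzW (hz2 ▸ W.add_mem hqW (W.smul_mem s h))
  have hr : r ≠ 0 := by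
    rintro rfl
    have : z = p := by rw [hz1]; simp
    exact hzW (this ▸ hpW)
  have hs : s ≠ 0 := by
    rintro rfl
    have : z = q := by rw [hz2]; simp
    exact hzW (this ▸ hqW)
  have hαβ : α ≠ β := by
    rintro rfl
    have h1 : z + α = z := by
      refine huniq (z + α) ⟨r + 1, s + 1, ?_, ?_⟩
      · rw [hz1]; rw [add_smul, one_smul]; abel
      · rw [hz2]; rw [add_smul, one_smul]; abel
    have : α = 0 := add_eq_left.1 h1
    exact hαW (this ▸ W.zero_mem)
  refine ⟨α, hα, β, hβ, hαβ, hαW, hβW, r, s, hr, hs, ?_⟩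
  have : r • α - s • β = q - p := by
    have h1 : r • α = z - p := by rw [hz1]; abel
    have h2 : s • β = z - q := by rw [hz2]; abel
    rw [h1, h2]; abel
  rw [this]
  exact W.sub_mem hqW hpW

/-- A family is linearly independent if each member is outside the span of earlier members. -/
lemma li_helper : ∀ {m : ℕ} (h : Fin m → V),
    (∀ i, h i ∉ Submodule.span ℝ (h '' {j | j < i})) → LinearIndependent ℝ h := by
  intro m
  induction m with
  | zero => intro h _; exact linearIndependent_empty_type
  | succ m ih =>
    intro h H
    rw [← Fin.snoc_init_self h, linearIndependent_fin_snoc]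
    constructor
    · refine ih (Fin.init h) fun i => ?_
      have himg : Fin.init h '' {j | j < i} = h '' {j | j < i.castSucc} := by
        ext x
        constructor
        · rintro ⟨j, hj, rfl⟩
          exact ⟨j.castSucc, by simpa [Fin.castSucc_lt_castSucc_iff] using hj, rfl⟩
        · rintro ⟨j, hj, rfl⟩
          have hjm : (j : ℕ) < m := by
            have := hj
            simp [Fin.lt_def] at this
            omega
          refine ⟨⟨j, hjm⟩, ?_, ?_⟩
          · have hji : (j : ℕ) < (i : ℕ) := by simpa [Fin.lt_def] using hj
            show (⟨j, hjm⟩ : Fin m) < i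
            rw [Fin.lt_def]
            simpa using hji
          · show h (Fin.castSucc ⟨j, hjm⟩) = h j
            have hjj : Fin.castSucc ⟨j, hjm⟩ = j := by ext; simp
            rw [hjj]
      have : Fin.init h i = h i.castSucc := rfl
      rw [this, himg]
      exact H i.castSucc
    · have hrng : Set.range (Fin.init h) = h '' {j | j < Fin.last m} := by
        ext x
        constructor
        · rintro ⟨j, rfl⟩
          exact ⟨j.castSucc, Fin.castSucc_lt_last j, rfl⟩
        · rintro ⟨j, hj, rfl⟩
          have hjm : (j : ℕ) < m := by
            simpa [Fin.lt_def] using hj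
          refine ⟨⟨j, hjm⟩, ?_⟩
          show h (Fin.castSucc ⟨j, hjm⟩) = h j
          have hjj : Fin.castSucc ⟨j, hjm⟩ = j := by ext; simp
          rw [hjj]
      rw [hrng]
      exact H (Fin.last m)

/-- Span of `u` together with the first `k` elements of the sequence `v`. -/
def WNspan (u : V) (v : ℕ → V) (k : ℕ) : Submodule ℝ V :=
  Submodule.span ℝ ({u} ∪ v '' {j | j < k})

lemma WNspan_mono (u : V) (v : ℕ → V) {k l : ℕ} (h : k ≤ l) :
    WNspan u v k ≤ WNspan u v l := by
  apply Submodule.span_mono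
  apply Set.union_subset_union_right
  apply Set.image_mono
  intro j hj
  exact lt_of_lt_of_le hj h

lemma WNspan_congr (u : V) {v w : ℕ → V} {k : ℕ} (h : ∀ j < k, v j = w j) :
    WNspan u v k = WNspan u w k := by
  unfold WNspan
  congr 1
  congr 1
  ext x
  constructor
  · rintro ⟨j, hj, rfl⟩; exact ⟨j, hj, (h j hj).symm⟩
  · rintro ⟨j, hj, rfl⟩; exact ⟨j, hj, h j hj⟩

lemma WNspan_u_mem (u : V) (v : ℕ → V) (k : ℕ) : u ∈ WNspan u v k :=
  Submodule.subset_span (Set.mem_union_left _ rfl)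

lemma WNspan_v_mem (u : V) (v : ℕ → V) {j k : ℕ} (h : j < k) : v j ∈ WNspan u v k :=
  Submodule.subset_span (Set.mem_union_right _ ⟨j, h, rfl⟩)

lemma WNspan_succ (u : V) (v : ℕ → V) (k : ℕ) :
    WNspan u v (k + 1) = WNspan u v k ⊔ Submodule.span ℝ {v k} := by
  rw [WNspan, WNspan, ← Submodule.span_union]
  congr 1
  ext x
  simp only [Set.mem_union, Set.mem_image, Set.mem_setOf_eq, Set.mem_singleton_iff]
  constructor
  · rintro (h | ⟨j, hj, rfl⟩)
    · exact Or.inl (Or.inl h)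
    · rcases Nat.lt_succ_iff_lt_or_eq.1 hj with h | rfl
      · exact Or.inl (Or.inr ⟨j, h, rfl⟩)
      · exact Or.inr rfl
  · rintro ((h | ⟨j, hj, rfl⟩) | h)
    · exact Or.inl h
    · exact Or.inr ⟨j, by omega, rfl⟩
    · exact Or.inr ⟨k, by omega, h.symm⟩

/-- The recursive construction of the pairs of directions. -/
lemma origami_build (n : ℕ) (U : Set V) (u : V)
    (key : ∀ W : Submodule ℝ V, u ∈ W → W ≠ ⊤ → ∃ α ∈ U, ∃ β ∈ U, α ≠ β ∧ α ∉ W ∧ β ∉ W ∧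
      ∃ r s : ℝ, r ≠ 0 ∧ s ≠ 0 ∧ r • α - s • β ∈ W)
    (htop : ∀ (v : ℕ → V) (m : ℕ), m < n → WNspan u v m ≠ ⊤) :
    ∃ v w : ℕ → V, ∀ i < n, v i ∈ U ∧ w i ∈ U ∧ v i ∉ WNspan u v i ∧ w i ∉ WNspan u v i ∧
      v i ≠ w i ∧ w i ∈ WNspan u v (i + 1) ∧
      ∃ r s : ℝ, r • v i - s • w i ∈ WNspan u v i := by
  classical
  suffices h : ∀ m, m ≤ n → ∃ v w : ℕ → V, ∀ i < m,
      v i ∈ U ∧ w i ∈ U ∧ v i ∉ WNspan u v i ∧ w i ∉ WNspan u v i ∧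
      v i ≠ w i ∧ w i ∈ WNspan u v (i + 1) ∧
      ∃ r s : ℝ, r • v i - s • w i ∈ WNspan u v i by
    exact h n le_rfl
  intro m
  induction m with
  | zero => exact fun _ => ⟨0, 0, fun i hi => absurd hi (Nat.not_lt_zero i)⟩
  | succ m ih =>
    intro hmn
    obtain ⟨v, w, hvw⟩ := ih (le_of_lt hmn)
    obtain ⟨α, hαU, β, hβU, hαβ, hαW, hβW, r, s, hr, hs, hrs⟩ :=
      key (WNspan u v m) (WNspan_u_mem u v m) (htop v m (by omega))
    refine ⟨Function.update v m α, Function.update w m β, ?_⟩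
    set v' := Function.update v m α with hv'
    set w' := Function.update w m β with hw'
    have hveq : ∀ j < m, v' j = v j := fun j hj => Function.update_of_ne (by omega) _ _
    have hweq : ∀ j < m, w' j = w j := fun j hj => Function.update_of_ne (by omega) _ _
    have hWeq : ∀ k ≤ m, WNspan u v' k = WNspan u v k := fun k hk =>
      WNspan_congr u (fun j hj => hveq j (by omega))
    intro i hi
    rcases Nat.lt_succ_iff_lt_or_eq.1 hi with hi | rfl
    · obtain ⟨h1, h2, h3, h4, h5, h6, r', s', h7⟩ := hvw i hi
      rw [hveq i hi, hweq i hi, hWeq i (by omega), hWeq (i+1) (by omega)]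
      exact ⟨h1, h2, h3, h4, h5, h6, r', s', h7⟩
    · have hv'i : v' i = α := Function.update_self _ _ _
      have hw'i : w' i = β := Function.update_self _ _ _
      have hWi : WNspan u v' i = WNspan u v i := hWeq i le_rfl
      rw [hv'i, hw'i, hWi]
      refine ⟨hαU, hβU, hαW, hβW, hαβ, ?_, r, s, hrs⟩
      rw [WNspan_succ, hWi, hv'i]
      set X := WNspan u v i ⊔ Submodule.span ℝ {α} with hX
      have h1 : α ∈ X := (le_sup_right : Submodule.span ℝ {α} ≤ X)
        (Submodule.mem_span_singleton_self α)
      have h2 : r • α - s • β ∈ X := (le_sup_left : WNspan u v i ≤ X) hrs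
      have h3 : s • β ∈ X := by
        have := X.sub_mem (X.smul_mem r h1) h2
        simpa using this
      have h4 : β = s⁻¹ • (s • β) := by
        rw [smul_smul, inv_mul_cancel₀ hs, one_smul]
      rw [h4]
      exact X.smul_mem _ h3

end Aux

/-- Proper subspaces: the span of at most `m + 1 ≤ n` vectors is not all of `ℝ^{n+1}`. -/
lemma WNspan_ne_top (n : ℕ) (u : EuclideanSpace ℝ (Fin (n + 1)))
    (v : ℕ → EuclideanSpace ℝ (Fin (n + 1))) (m : ℕ) (hm : m < n) :
    WNspan u v m ≠ ⊤ := by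
  intro htop
  set g : Fin (m + 1) → EuclideanSpace ℝ (Fin (n + 1)) :=
    Fin.cons u (fun i : Fin m => v i) with hg
  have hle : WNspan u v m ≤ Submodule.span ℝ (Set.range g) := by
    apply Submodule.span_le.2
    rintro x (rfl | ⟨j, hj, rfl⟩)
    · exact Submodule.subset_span ⟨0, rfl⟩
    · exact Submodule.subset_span ⟨Fin.succ ⟨j, hj⟩, Fin.cons_succ _ _ _⟩
  have h1 : Module.finrank ℝ (Submodule.span ℝ (Set.range g)) ≤ m + 1 := by
    exact (by simpa using finrank_range_le_card g : Set.finrank ℝ (Set.range g) ≤ m + 1)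
  have h2 : Module.finrank ℝ (WNspan u v m) ≤ m + 1 :=
    le_trans (Submodule.finrank_mono hle) h1
  rw [htop, finrank_top] at h2
  rw [finrank_euclideanSpace_fin] at h2
  omega

theorem stmt15 (n : ℕ) (U : Set (EuclideanSpace ℝ (Fin (n + 1))))
    (hone : uno n ∈ U)
    (b : Module.Basis (Fin (n + 1)) ℝ (EuclideanSpace ℝ (Fin (n + 1))))
    (hlat : MU U (uno n) =
      {z | ∃ c : Fin (n + 1) → ℤ, z = ∑ i, (c i : ℝ) • b i}) :
    (U.Finite → 2 * (n + 1) - 1 ≤ U.ncard) ∧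
    ∃ α α' : Fin n → EuclideanSpace ℝ (Fin (n + 1)),
      (∀ i, α i ∈ U) ∧ (∀ i, α' i ∈ U) ∧
      LinearIndependent ℝ (Fin.cons (uno n) α : Fin (n + 1) → EuclideanSpace ℝ (Fin (n + 1))) ∧
      (∀ i, ∃ r s : ℝ, r • α i - s • α' i ∈
        Submodule.span ℝ ({uno n} ∪ {x | ∃ j, j < i ∧ x = α j})) := by
  classical
  have hMU : ∀ W : Submodule ℝ (EuclideanSpace ℝ (Fin (n + 1))), W ≠ ⊤ →
      ∃ z ∈ MU U (uno n), z ∉ W := by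
    intro W hW
    by_contra hcon
    push_neg at hcon
    apply hW
    have hbW : ∀ i, b i ∈ W := by
      intro i
      apply hcon
      rw [hlat]
      refine ⟨fun j => if j = i then 1 else 0, ?_⟩
      simp
    rw [eq_top_iff, ← b.span_eq, Submodule.span_le]
    rintro x ⟨i, rfl⟩
    exact hbW i
  have key := fun W hu hW => origami_key U (uno n) W hu (hMU W hW)
  obtain ⟨v, w, hvw⟩ := origami_build n U (uno n) key
    (fun v m hm => WNspan_ne_top n (uno n) v m hm)
  have hwmem : ∀ i : ℕ, i < n → w i ∈ WNspan (uno n) v (i + 1) :=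
    fun i hi => (hvw i hi).2.2.2.2.2.1
  have hvmem : ∀ i : ℕ, v i ∈ WNspan (uno n) v (i + 1) :=
    fun i => WNspan_v_mem _ _ (Nat.lt_succ_self i)
  have hdist : ∀ i j : ℕ, i < n → j < n → i < j →
      v i ≠ v j ∧ v i ≠ w j ∧ w i ≠ v j ∧ w i ≠ w j := by
    intro i j hi hj hij
    have h1 : v i ∈ WNspan (uno n) v j := WNspan_mono _ _ (by omega) (hvmem i)
    have h2 : w i ∈ WNspan (uno n) v j := WNspan_mono _ _ (by omega) (hwmem i hi)
    have h3 := (hvw j hj).2.2.1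
    have h4 := (hvw j hj).2.2.2.1
    exact ⟨fun h => h3 (h ▸ h1), fun h => h4 (h ▸ h1),
      fun h => h3 (h ▸ h2), fun h => h4 (h ▸ h2)⟩
  have huno : ∀ i : ℕ, i < n → uno n ≠ v i ∧ uno n ≠ w i := by
    intro i hi
    have h0 : uno n ∈ WNspan (uno n) v i := WNspan_u_mem _ _ _
    exact ⟨fun h => (hvw i hi).2.2.1 (h ▸ h0), fun h => (hvw i hi).2.2.2.1 (h ▸ h0)⟩
  have hvwne : ∀ i : ℕ, i < n → v i ≠ w i := fun i hi => (hvw i hi).2.2.2.2.1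
  constructor
  · -- cardinality bound
    intro hUfin
    set f : Option (Fin n ⊕ Fin n) → EuclideanSpace ℝ (Fin (n + 1)) :=
      fun x => Option.elim x (uno n)
        (Sum.elim (fun i : Fin n => v i) (fun i : Fin n => w i)) with hf
    have hinj : Function.Injective f := by
      rintro (_ | (i | i)) (_ | (j | j)) hxy
      · rfl
      · exact absurd hxy (huno j j.isLt).1
      · exact absurd hxy (huno j j.isLt).2
      · exact absurd hxy.symm (huno i i.isLt).1
      · rcases lt_trichotomy (i : ℕ) (j : ℕ) with h | h | h
        · exact absurd hxy (hdist i j i.isLt j.isLt h).1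
        · rw [Fin.ext h]
        · exact absurd hxy.symm (hdist j i j.isLt i.isLt h).1
      · rcases lt_trichotomy (i : ℕ) (j : ℕ) with h | h | h
        · exact absurd hxy (hdist i j i.isLt j.isLt h).2.1
        · exact absurd hxy ((Fin.ext h : i = j) ▸ hvwne i i.isLt)
        · exact absurd hxy.symm (hdist j i j.isLt i.isLt h).2.2.1
      · exact absurd hxy.symm (huno i i.isLt).2
      · rcases lt_trichotomy (i : ℕ) (j : ℕ) with h | h | h
        · exact absurd hxy (hdist i j i.isLt j.isLt h).2.2.1
        · exact absurd hxy.symm ((Fin.ext h : i = j) ▸ hvwne i i.isLt)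
        · exact absurd hxy.symm (hdist j i j.isLt i.isLt h).2.1
      · rcases lt_trichotomy (i : ℕ) (j : ℕ) with h | h | h
        · exact absurd hxy (hdist i j i.isLt j.isLt h).2.2.2
        · rw [Fin.ext h]
        · exact absurd hxy.symm (hdist j i j.isLt i.isLt h).2.2.2
    have hrange : Set.range f ⊆ U := by
      rintro x ⟨y, rfl⟩
      rcases y with _ | (i | i)
      · exact hone
      · exact (hvw i i.isLt).1
      · exact (hvw i i.isLt).2.1
    have hcard : (Set.range f).ncard = 2 * n + 1 := by
      rw [← Nat.card_coe_set_eq, Nat.card_range_of_injective hinj,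
        Nat.card_eq_fintype_card]
      simp
      omega
    have hle := Set.ncard_le_ncard hrange hUfin
    omega
  · -- the families
    refine ⟨fun i => v i, fun i => w i, fun i => (hvw i i.isLt).1,
      fun i => (hvw i i.isLt).2.1, ?_, ?_⟩
    · apply li_helper
      intro i
      refine Fin.cases ?_ ?_ i
      · have hempty : ((Fin.cons (uno n) (fun i : Fin n => v i) :
            Fin (n + 1) → EuclideanSpace ℝ (Fin (n + 1))) '' {j | j < 0}) = ∅ := by
          have : {j : Fin (n + 1) | j < 0} = ∅ := by
            ext j; simp
          rw [this, Set.image_empty]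
        rw [Fin.cons_zero, hempty, Submodule.span_empty]
        simp only [Submodule.mem_bot]
        intro h
        have h1 : (uno n) 0 = 1 := by simp [uno, EuclideanSpace.single_apply]
        rw [h] at h1
        simp at h1
      · intro k
        rw [Fin.cons_succ]
        have himg : ((Fin.cons (uno n) (fun i : Fin n => v i) :
            Fin (n + 1) → EuclideanSpace ℝ (Fin (n + 1))) '' {j | j < Fin.succ k}) =
            {uno n} ∪ v '' {j : ℕ | j < (k : ℕ)} := by
          ext x
          constructor
          · rintro ⟨j, hj, rfl⟩
            rcases Fin.eq_zero_or_eq_succ j with rfl | ⟨j', rfl⟩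
            · exact Or.inl (by rw [Fin.cons_zero]; rfl)
            · have hj2 : j'.succ < k.succ := hj
              have hj' : (j' : ℕ) < (k : ℕ) := by
                rw [Fin.succ_lt_succ_iff, Fin.lt_def] at hj2
                exact hj2
              exact Or.inr ⟨(j' : ℕ), hj',
                (Fin.cons_succ (α := fun _ : Fin (n + 1) => EuclideanSpace ℝ (Fin (n + 1)))
                  (uno n) (fun i : Fin n => v (i : ℕ)) j').symm⟩
          · rintro (rfl | ⟨j, hj, rfl⟩)
            · exact ⟨0, Fin.succ_pos k, Fin.cons_zero _ _⟩
            · refine ⟨Fin.succ ⟨j, lt_trans hj k.isLt⟩, ?_, ?_⟩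
              · show Fin.succ ⟨j, lt_trans hj k.isLt⟩ < Fin.succ k
                rw [Fin.lt_def]
                simpa using hj
              · exact Fin.cons_succ (α := fun _ : Fin (n + 1) => EuclideanSpace ℝ (Fin (n + 1)))
                  (uno n) (fun i : Fin n => v (i : ℕ)) ⟨j, lt_trans hj k.isLt⟩
        rw [himg]
        exact (hvw (k : ℕ) k.isLt).2.2.1
    · intro i
      obtain ⟨r, s, hrs⟩ := (hvw (i : ℕ) i.isLt).2.2.2.2.2.2
      refine ⟨r, s, ?_⟩
      have hset : ({uno n} ∪ {x | ∃ j, j < i ∧ x = v (j : ℕ)}) =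
          ({uno n} ∪ v '' {j : ℕ | j < (i : ℕ)}) := by
        ext x
        simp only [Set.mem_union, Set.mem_setOf_eq, Set.mem_image, Set.mem_singleton_iff]
        apply or_congr_right
        constructor
        · rintro ⟨j, hj, rfl⟩
          exact ⟨(j : ℕ), hj, rfl⟩
        · rintro ⟨j, hj, rfl⟩
          exact ⟨⟨j, lt_trans hj i.isLt⟩, by rw [Fin.lt_def]; simpa using hj, rfl⟩
      rw [hset]
      exact hrs
end
end

section
/- Let Λ = ℤ + ℤτ₁ + ⋯ + ℤτ_{n−1} be a full lattice in ℝⁿ containing the seed points, and suppose p, q ∈ Λ and α, β ∈ U = {1, α₁, α₁′, ..., α_{n−1}, α_{n−1}′} with αᵢ = τᵢ/‖τᵢ‖, αᵢ′ = (τᵢ−1)/‖τᵢ−1‖ and {1, τ₁, ..., τ_{n−1}} an ℝ-basis of ℝⁿ. Then whenever the intersection ⟦p,q⟧_{α,β} is defined, it lies in Λ (Λ is closed under the intersection operator with directions from U). -/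
noncomputable section

open scoped Quaternion

section Aux
variable {V : Type*} [AddCommGroup V] [Module ℝ V]

lemma origami_not_self {p q α z : V} (hα : α ≠ 0)
    (hz : OrigamiInter p q α α z) : False := by
  obtain ⟨⟨r, s, h1, h2⟩, huniq⟩ := hz
  have h := huniq (z + α) ⟨r + 1, s + 1, by rw [h1]; module, by rw [h2]; module⟩
  exact hα (add_eq_left.mp h)

lemma origami_eq {p q α β z : V} (hz : OrigamiInter p q α β z)
    (φ : V →ₗ[ℝ] ℝ) (w : V) (hβ : φ β = 0) (hw : α = φ α • w) :
    z = p + (φ q - φ p) • w := by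
  obtain ⟨⟨r, s, h1, h2⟩, -⟩ := hz
  have hq : φ z = φ q := by rw [h2]; simp [hβ]
  have hp : φ z = φ p + r * φ α := by rw [h1]; simp [mul_comm]
  have hr : φ q - φ p = r * φ α := by rw [← hq, hp]; ring
  rw [hr, h1]
  nth_rewrite 1 [hw]
  module

lemma origami_int {ι : Type*} [Fintype ι] (b : Module.Basis ι ℝ V)
    {p q α β z : V} (hz : OrigamiInter p q α β z)
    (hp : ∀ i, ∃ k : ℤ, b.repr p i = k) (hq : ∀ i, ∃ k : ℤ, b.repr q i = k)
    (φ : V →ₗ[ℝ] ℝ) (hφ : ∀ j, ∃ k : ℤ, φ (b j) = k)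
    (w : V) (hw : ∀ i, ∃ k : ℤ, b.repr w i = k)
    (hβ0 : φ β = 0) (hαw : α = φ α • w) :
    ∀ i, ∃ k : ℤ, b.repr z i = k := by
  have hzz := origami_eq hz φ w hβ0 hαw
  have hint : ∀ x : V, (∀ i, ∃ k : ℤ, b.repr x i = k) → ∃ k : ℤ, φ x = k := by
    intro x hx
    choose c hc using hx
    choose d hd using hφ
    refine ⟨∑ j, c j * d j, ?_⟩
    have h : φ x = ∑ j, b.repr x j * φ (b j) := by
      conv_lhs => rw [← b.sum_repr x]
      simp only [map_sum, map_smul, smul_eq_mul]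
    rw [h]
    push_cast
    exact Finset.sum_congr rfl fun j _ => by rw [hc, hd]
  obtain ⟨kp, hkp⟩ := hint p hp
  obtain ⟨kq, hkq⟩ := hint q hq
  intro i
  obtain ⟨cp, hcp⟩ := hp i
  obtain ⟨cw, hcw⟩ := hw i
  refine ⟨cp + (kq - kp) * cw, ?_⟩
  have h : b.repr z i = b.repr p i + (φ q - φ p) * b.repr w i := by
    rw [hzz]; simp
  rw [h, hcp, hcw, hkp, hkq]; push_cast; ring

end Aux

theorem stmt16 (n : ℕ) (τ : Fin n → EuclideanSpace ℝ (Fin (n + 1)))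
    (hind : LinearIndependent ℝ (Fin.cons (uno n) τ : Fin (n + 1) → EuclideanSpace ℝ (Fin (n + 1))))
    (hspan : Submodule.span ℝ (Set.range (Fin.cons (uno n) τ : Fin (n + 1) → EuclideanSpace ℝ (Fin (n + 1)))) = ⊤)
    (Λ : Set (EuclideanSpace ℝ (Fin (n + 1))))
    (hΛ : Λ = {z | ∃ (a : ℤ) (b : Fin n → ℤ),
      z = (a : ℝ) • uno n + ∑ i, (b i : ℝ) • τ i})
    (p q : EuclideanSpace ℝ (Fin (n + 1))) (hp : p ∈ Λ) (hq : q ∈ Λ)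
    (α β : EuclideanSpace ℝ (Fin (n + 1)))
    (hαU : α ∈ ({uno n} ∪ (Set.range fun i => ‖τ i‖⁻¹ • τ i)
        ∪ (Set.range fun i => ‖τ i - uno n‖⁻¹ • (τ i - uno n)) : Set (EuclideanSpace ℝ (Fin (n + 1)))))
    (hβU : β ∈ ({uno n} ∪ (Set.range fun i => ‖τ i‖⁻¹ • τ i)
        ∪ (Set.range fun i => ‖τ i - uno n‖⁻¹ • (τ i - uno n)) : Set (EuclideanSpace ℝ (Fin (n + 1)))))
    (z : EuclideanSpace ℝ (Fin (n + 1))) (hz : OrigamiInter p q α β z) :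
    z ∈ Λ := by
  have hsp' : ⊤ ≤ Submodule.span ℝ
      (Set.range (Fin.cons (uno n) τ : Fin (n + 1) → EuclideanSpace ℝ (Fin (n + 1)))) := hspan.ge
  set b : Module.Basis (Fin (n + 1)) ℝ (EuclideanSpace ℝ (Fin (n + 1))) := Module.Basis.mk hind hsp' with hbdef
  have hb0 : b 0 = uno n := by rw [hbdef, Module.Basis.mk_apply, Fin.cons_zero]
  have hbs : ∀ i, b i.succ = τ i := fun i => by rw [hbdef, Module.Basis.mk_apply, Fin.cons_succ]
  -- membership in Λ ↔ integer coordinates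
  have hmem : ∀ x, x ∈ Λ ↔ ∀ i, ∃ k : ℤ, b.repr x i = k := by
    intro x
    constructor
    · intro hx
      rw [hΛ] at hx
      obtain ⟨a, c, hxe⟩ := hx
      set d : Fin (n + 1) → ℤ := Fin.cons a c with hd
      have hx' : x = ∑ j, ((d j : ℤ) : ℝ) • b j := by
        rw [Fin.sum_univ_succ]
        simp [hd, hb0, hbs, hxe, Fin.cons_zero, Fin.cons_succ]
      intro i
      refine ⟨d i, ?_⟩
      rw [hx']
      simp [map_sum, map_smul, Finsupp.single_apply, Module.Basis.repr_self]
    · intro h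
      choose k hk using h
      rw [hΛ]
      refine ⟨k 0, fun i => k i.succ, ?_⟩
      have hx : x = ∑ j, ((k j : ℝ)) • b j := by
        conv_lhs => rw [← b.sum_repr x]
        exact Finset.sum_congr rfl fun j _ => by rw [hk]
      rw [hx, Fin.sum_univ_succ, hb0]
      simp [hbs]
  -- basic integrality facts
  have hbint : ∀ j i : Fin (n + 1), ∃ k : ℤ, b.repr (b j) i = k := by
    intro j i
    refine ⟨if j = i then 1 else 0, ?_⟩
    rw [Module.Basis.repr_self_apply]
    split_ifs <;> simp
  have huint : ∀ i, ∃ k : ℤ, b.repr (uno n) i = k := by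
    intro i; rw [← hb0]; exact hbint 0 i
  have hτint : ∀ j i, ∃ k : ℤ, b.repr (τ j) i = k := by
    intro j i; rw [← hbs j]; exact hbint j.succ i
  have hsubint : ∀ j i, ∃ k : ℤ, b.repr (τ j - uno n) i = k := by
    intro j i
    obtain ⟨k1, h1⟩ := hτint j i
    obtain ⟨k2, h2⟩ := huint i
    exact ⟨k1 - k2, by rw [map_sub, Finsupp.sub_apply, h1, h2]; push_cast; ring⟩
  -- coordinate values
  have hru : ∀ m, b.repr (uno n) m = if (0 : Fin (n + 1)) = m then 1 else 0 := by
    intro m; rw [← hb0, Module.Basis.repr_self_apply]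
  have hrτ : ∀ j m, b.repr (τ j) m = if j.succ = m then 1 else 0 := by
    intro j m; rw [← hbs j, Module.Basis.repr_self_apply]
  -- nonzeroness
  have hune : uno n ≠ 0 := hb0 ▸ b.ne_zero 0
  have hτne : ∀ i, τ i ≠ 0 := fun i => hbs i ▸ b.ne_zero i.succ
  have hτune : ∀ i, τ i - uno n ≠ 0 := by
    intro i h
    have h' : b i.succ = b 0 := by rw [hb0, hbs]; exact sub_eq_zero.mp h
    exact Fin.succ_ne_zero i (b.injective h')
  -- the finisher
  have FIN : ∀ (φ : EuclideanSpace ℝ (Fin (n + 1)) →ₗ[ℝ] ℝ),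
      (∀ j, ∃ k : ℤ, φ (b j) = k) →
      ∀ w : EuclideanSpace ℝ (Fin (n + 1)), (∀ i, ∃ k : ℤ, b.repr w i = k) →
      φ β = 0 → α = φ α • w → z ∈ Λ := by
    intro φ hφ w hw h1 h2
    exact (hmem z).mpr (origami_int b hz ((hmem p).mp hp) ((hmem q).mp hq) φ hφ w hw h1 h2)
  -- integrality of various functionals
  have hφ1 : ∀ m : Fin (n + 1), ∀ j, ∃ k : ℤ, (b.coord m) (b j) = k := by
    intro m j; rw [Module.Basis.coord_apply]; exact hbint j m
  have hφ2 : ∀ m l : Fin (n + 1), ∀ j, ∃ k : ℤ, (b.coord m + b.coord l) (b j) = k := by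
    intro m l j
    obtain ⟨k1, h1⟩ := hbint j m
    obtain ⟨k2, h2⟩ := hbint j l
    refine ⟨k1 + k2, ?_⟩
    simp only [LinearMap.add_apply, Module.Basis.coord_apply]
    rw [h1, h2]; push_cast; ring
  have hφ3 : ∀ j, ∃ k : ℤ, (-(b.coord 0)) (b j) = k := by
    intro j
    obtain ⟨k, h⟩ := hbint j 0
    refine ⟨-k, ?_⟩
    simp only [LinearMap.neg_apply, Module.Basis.coord_apply]
    rw [h]; push_cast; ring
  simp only [Set.mem_union, Set.mem_singleton_iff, Set.mem_range] at hαU hβU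
  rcases hαU with (hα | ⟨i, hi⟩) | ⟨i, hi⟩
  -- α = uno
  · rcases hβU with (hβ | ⟨j, hj⟩) | ⟨j, hj⟩
    · -- β = uno : parallel
      rw [hα, hβ] at hz
      exact (origami_not_self hune hz).elim
    · -- β = c • τ j : φ = coord 0
      replace hj := hj.symm
      refine FIN (b.coord 0) (hφ1 0) (uno n) huint ?_ ?_
      · rw [hj]
        simp [Module.Basis.coord_apply, hrτ, (Fin.succ_ne_zero j), (Fin.succ_ne_zero j).symm]
      · have h1 : (b.coord 0) α = 1 := by rw [hα]; simp [Module.Basis.coord_apply, hru]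
        rw [h1, one_smul, hα]
    · -- β = c • (τ j - uno) : φ = coord 0 + coord j.succ
      replace hj := hj.symm
      refine FIN (b.coord 0 + b.coord j.succ) (hφ2 0 j.succ) (uno n) huint ?_ ?_
      · rw [hj]
        simp [Module.Basis.coord_apply, map_sub, hru, hrτ, (Fin.succ_ne_zero j),
          (Fin.succ_ne_zero j).symm]
      · have h1 : (b.coord 0 + b.coord j.succ) α = 1 := by
          rw [hα]
          simp [Module.Basis.coord_apply, hru, (Fin.succ_ne_zero j), (Fin.succ_ne_zero j).symm]
        rw [h1, one_smul, hα]
  -- α = ‖τ i‖⁻¹ • τ i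
  · replace hi := hi.symm
    have hφα : ∀ φ : EuclideanSpace ℝ (Fin (n + 1)) →ₗ[ℝ] ℝ,
        φ (τ i) = 1 → α = φ α • τ i := by
      intro φ h
      rw [hi, map_smul, smul_eq_mul, h, mul_one]
    rcases hβU with (hβ | ⟨j, hj⟩) | ⟨j, hj⟩
    · -- β = uno : φ = coord i.succ
      refine FIN (b.coord i.succ) (hφ1 i.succ) (τ i) (hτint i) ?_ ?_
      · rw [hβ]
        simp [Module.Basis.coord_apply, hru, (Fin.succ_ne_zero i), (Fin.succ_ne_zero i).symm]
      · exact hφα _ (by simp [Module.Basis.coord_apply, hrτ])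
    · -- β = c • τ j
      replace hj := hj.symm
      by_cases hij : j = i
      · subst hij
        have hαβ : α = β := hi.trans hj.symm
        rw [hαβ] at hz
        have hβne : β ≠ 0 := by
          rw [hj]
          exact smul_ne_zero (inv_ne_zero (norm_ne_zero_iff.mpr (hτne j))) (hτne j)
        exact (origami_not_self hβne hz).elim
      · refine FIN (b.coord i.succ) (hφ1 i.succ) (τ i) (hτint i) ?_ ?_
        · rw [hj]
          simp [Module.Basis.coord_apply, hrτ, hij, fun h => hij (Fin.succ_injective _ h)]
        · exact hφα _ (by simp [Module.Basis.coord_apply, hrτ])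
    · -- β = c • (τ j - uno)
      replace hj := hj.symm
      by_cases hij : j = i
      · subst hij
        refine FIN (b.coord 0 + b.coord j.succ) (hφ2 0 j.succ) (τ j) (hτint j) ?_ ?_
        · rw [hj]
          simp [Module.Basis.coord_apply, map_sub, hru, hrτ, (Fin.succ_ne_zero j),
            (Fin.succ_ne_zero j).symm]
        · exact hφα _ (by
            simp [Module.Basis.coord_apply, hru, hrτ, (Fin.succ_ne_zero j),
              (Fin.succ_ne_zero j).symm])
      · refine FIN (b.coord i.succ) (hφ1 i.succ) (τ i) (hτint i) ?_ ?_
        · rw [hj]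
          simp [Module.Basis.coord_apply, map_sub, hru, hrτ, (Fin.succ_ne_zero i),
            (Fin.succ_ne_zero i).symm, hij, fun h => hij (Fin.succ_injective _ h)]
        · exact hφα _ (by simp [Module.Basis.coord_apply, hrτ])
  -- α = ‖τ i - uno‖⁻¹ • (τ i - uno)
  · replace hi := hi.symm
    have hφα : ∀ φ : EuclideanSpace ℝ (Fin (n + 1)) →ₗ[ℝ] ℝ,
        φ (τ i - uno n) = 1 → α = φ α • (τ i - uno n) := by
      intro φ h
      rw [hi, map_smul, smul_eq_mul, h, mul_one]
    rcases hβU with (hβ | ⟨j, hj⟩) | ⟨j, hj⟩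
    · -- β = uno : φ = coord i.succ
      refine FIN (b.coord i.succ) (hφ1 i.succ) (τ i - uno n) (hsubint i) ?_ ?_
      · rw [hβ]
        simp [Module.Basis.coord_apply, hru, (Fin.succ_ne_zero i), (Fin.succ_ne_zero i).symm]
      · exact hφα _ (by
          simp [Module.Basis.coord_apply, map_sub, hrτ, hru, (Fin.succ_ne_zero i),
            (Fin.succ_ne_zero i).symm])
    · -- β = c • τ j
      replace hj := hj.symm
      by_cases hij : j = i
      · subst hij
        refine FIN (-(b.coord 0)) hφ3 (τ j - uno n) (hsubint j) ?_ ?_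
        · rw [hj]
          simp [Module.Basis.coord_apply, hrτ, (Fin.succ_ne_zero j), (Fin.succ_ne_zero j).symm]
        · exact hφα _ (by
            simp [Module.Basis.coord_apply, map_sub, hrτ, hru, (Fin.succ_ne_zero j),
              (Fin.succ_ne_zero j).symm])
      · refine FIN (b.coord i.succ) (hφ1 i.succ) (τ i - uno n) (hsubint i) ?_ ?_
        · rw [hj]
          simp [Module.Basis.coord_apply, hrτ, hij, fun h => hij (Fin.succ_injective _ h)]
        · exact hφα _ (by
            simp [Module.Basis.coord_apply, map_sub, hrτ, hru, (Fin.succ_ne_zero i),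
              (Fin.succ_ne_zero i).symm])
    · -- β = c • (τ j - uno)
      replace hj := hj.symm
      by_cases hij : j = i
      · subst hij
        have hαβ : α = β := hi.trans hj.symm
        rw [hαβ] at hz
        have hβne : β ≠ 0 := by
          rw [hj]
          exact smul_ne_zero (inv_ne_zero (norm_ne_zero_iff.mpr (hτune j))) (hτune j)
        exact (origami_not_self hβne hz).elim
      · refine FIN (b.coord i.succ) (hφ1 i.succ) (τ i - uno n) (hsubint i) ?_ ?_
        · rw [hj]
          simp [Module.Basis.coord_apply, map_sub, hrτ, hru, (Fin.succ_ne_zero i),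
            (Fin.succ_ne_zero i).symm, hij, fun h => hij (Fin.succ_injective _ h)]
        · exact hφα _ (by
            simp [Module.Basis.coord_apply, map_sub, hrτ, hru, (Fin.succ_ne_zero i),
              (Fin.succ_ne_zero i).symm])
end
end
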